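/- A 1-form α on the tangent bundle TM annihilates every second-order differential equation (i.e. is a contact form) if and only if α is horizontal and the function α̇ := ⟨α, ḋ⟩ vanishes identically, where α̇(v_a) = α_{v_a}(v_a) via the horizontal pairing. -/
import Mathlib


/-- A 1-form `α` on `TM` annihilates every second-order
differential equation (i.e. is a contact form) iff `α` is horizontal and the
function `α̇` vanishes identically.  In coordinates `TM = ℝⁿ × ℝⁿ`: a 1-form is
a field of covectors `α p : T_p(TM) →L[ℝ] ℝ`; a second-order differential
equation is a field `D` with `(D p).1 = p.2`; `α` is horizontal when it kills
the vertical vectors `(0, w)`; and `α̇(p) = α_p(p.2, 0)` is the pairing of the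
horizontal form `α` with the velocity `p.2`. -/
theorem stmt_2 {n : ℕ}
    (α : (Fin n → ℝ) × (Fin n → ℝ) → (((Fin n → ℝ) × (Fin n → ℝ)) →L[ℝ] ℝ)) :
    (∀ D : (Fin n → ℝ) × (Fin n → ℝ) → (Fin n → ℝ) × (Fin n → ℝ),
        (∀ p, (D p).1 = p.2) → ∀ p, α p (D p) = 0)
      ↔ ((∀ p w, α p (0, w) = 0) ∧ (∀ p, α p (p.2, 0) = 0)) := by
  constructor
  · intro h
    have key : ∀ p w, α p (p.2, w) = 0 := by
      intro p w
      have := h (fun q => (q.2, w)) (fun q => rfl) p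
      simpa using this
    refine ⟨fun p w => ?_, fun p => by simpa using key p 0⟩
    have h1 := key p 0
    have h2 := key p w
    have : ((p.2, w) : (Fin n → ℝ) × (Fin n → ℝ)) = (p.2, 0) + (0, w) := by
      simp [Prod.ext_iff]
    rw [this, map_add, h1, zero_add] at h2
    exact h2
  · rintro ⟨hv, hh⟩ D hD p
    have : D p = (p.2, 0) + (0, (D p).2) := by
      simp [Prod.ext_iff, hD p]
    rw [this, map_add, hv, hh, add_zero]
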